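/- Let (F,v) be a c-fusion frame for H with bounds A_{F,v} and B_{F,v}. Then A_{F,v} · dim H ≤ ∫_X v²(x) dim F(x) dμ(x) ≤ B_{F,v} · dim H. In particular if dim H < ∞, then A_{F,v} ≤ ∫_X v²(x) dμ(x). -/

import Mathlib

open MeasureTheory
open scoped ENNReal InnerProductSpace

noncomputable section

variable {H : Type} [NormedAddCommGroup H] [InnerProductSpace ℂ H] [CompleteSpace H]
variable {X : Type} [MeasurableSpace X]

open scoped Classical in
def projFn (W : Submodule ℂ H) (h : H) : H :=
  if hW : IsClosed (W : Set H) then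
    haveI : CompleteSpace W := hW.completeSpace_coe
    (W.orthogonalProjectionOnto h : H)
  else 0

structure IsCBessel (μ : Measure X) (F : X → Submodule ℂ H) (v : X → ℝ) (B : ℝ) : Prop where
  closed : ∀ x, IsClosed ((F x) : Set H)
  meas : ∀ h : H, AEStronglyMeasurable (fun x => projFn (F x) h) μ
  bessel : ∀ h : H,
    ∫⁻ x, ENNReal.ofReal ((v x) ^ 2 * ‖projFn (F x) h‖ ^ 2) ∂μ ≤ ENNReal.ofReal (B * ‖h‖ ^ 2)

structure IsCFusionFrame (μ : Measure X) (F : X → Submodule ℂ H) (v : X → ℝ)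
    (A B : ℝ) extends IsCBessel μ F v B : Prop where
  posA : 0 < A
  lower : ∀ h : H,
    ENNReal.ofReal (A * ‖h‖ ^ 2) ≤ ∫⁻ x, ENNReal.ofReal ((v x) ^ 2 * ‖projFn (F x) h‖ ^ 2) ∂μ

def L2F (μ : Measure X) (F : X → Submodule ℂ H) : Submodule ℂ (Lp H 2 μ) where
  carrier := {f | ∀ᵐ x ∂μ, f x ∈ F x}
  add_mem' := by
    intro f g hf hg
    filter_upwards [hf, hg, Lp.coeFn_add f g] with x h1 h2 h3
    rw [h3]
    exact add_mem h1 h2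
  zero_mem' := by
    filter_upwards [Lp.coeFn_zero H 2 μ] with x h1
    rw [h1]; exact zero_mem _
  smul_mem' := by
    intro c f hf
    filter_upwards [hf, Lp.coeFn_smul c f] with x h1 h2
    rw [h2]
    exact Submodule.smul_mem _ _ h1

def IsSynthesis (μ : Measure X) (F : X → Submodule ℂ H) (v : X → ℝ)
    (T : L2F μ F →L[ℂ] H) : Prop :=
  ∀ (f : L2F μ F) (h : H),
    (⟪T f, h⟫_ℂ : ℂ) = ∫ x, (v x : ℂ) * (⟪(↑f : Lp H 2 μ) x, h⟫_ℂ : ℂ) ∂μ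


section Aux

lemma aux_onb_norm_sq {ι E : Type*} [Fintype ι] [NormedAddCommGroup E] [InnerProductSpace ℂ E]
    (b : OrthonormalBasis ι ℂ E) (x : E) : ‖x‖ ^ 2 = ∑ i, ‖⟪b i, x⟫_ℂ‖ ^ 2 := by
  rw [← b.repr.norm_map x, EuclideanSpace.norm_eq, Real.sq_sqrt (by positivity)]
  simp [b.repr_apply_apply]

variable {H : Type} [NormedAddCommGroup H] [InnerProductSpace ℂ H] [CompleteSpace H]

lemma aux_projFn_eq {W : Submodule ℂ H} (hW : IsClosed (W : Set H)) [CompleteSpace W] (h : H) :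
    projFn W h = (W.orthogonalProjectionOnto h : H) := by
  unfold projFn
  rw [dif_pos hW]

lemma aux_projFn_expand {W : Submodule ℂ H} (hW : IsClosed (W : Set H)) [FiniteDimensional ℂ W]
    (h : H) :
    ‖projFn W h‖ ^ 2 = ∑ j, ‖⟪((stdOrthonormalBasis ℂ W) j : H), h⟫_ℂ‖ ^ 2 := by
  haveI : CompleteSpace W := FiniteDimensional.complete ℂ W
  rw [aux_projFn_eq hW]
  have h0 : ‖(W.orthogonalProjectionOnto h : H)‖ = ‖W.orthogonalProjectionOnto h‖ := rfl
  rw [h0, aux_onb_norm_sq (stdOrthonormalBasis ℂ W)]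
  refine Finset.sum_congr rfl fun j _ => ?_
  rw [Submodule.inner_orthogonalProjectionOnto_eq_of_mem_left]

lemma aux_dim_cast {E : Type*} [AddCommGroup E] [Module ℂ E] [Module.Finite ℂ E] :
    ((Module.rank ℂ E).toENat : ℝ≥0∞) = (Module.finrank ℂ E : ℝ≥0∞) := by
  rw [← Module.finrank_eq_rank, Cardinal.toENat_nat, ENat.toENNReal_coe]

lemma aux_dim_top {E : Type*} [AddCommGroup E] [Module ℂ E] (h : ¬ Module.Finite ℂ E) :
    ((Module.rank ℂ E).toENat : ℝ≥0∞) = ⊤ := by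
  rw [Cardinal.toENat_eq_top.2 (not_lt.1 fun hlt => h (Module.rank_lt_aleph0_iff.1 hlt))]
  rfl

lemma aux_sum_proj_le {n : ℕ} {e : Fin n → H} (he : Orthonormal ℂ e) (W : Submodule ℂ H)
    (hW : IsClosed (W : Set H)) :
    ∑ i, ENNReal.ofReal (‖projFn W (e i)‖ ^ 2) ≤ ((Module.rank ℂ W).toENat : ℝ≥0∞) := by
  by_cases hfin : FiniteDimensional ℂ W
  · set b := stdOrthonormalBasis ℂ W with hb
    have hreal : ∑ i, ‖projFn W (e i)‖ ^ 2 ≤ (Module.finrank ℂ W : ℝ) := by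
      calc ∑ i, ‖projFn W (e i)‖ ^ 2
          = ∑ i, ∑ j, ‖⟪(b j : H), e i⟫_ℂ‖ ^ 2 :=
            Finset.sum_congr rfl fun i _ => aux_projFn_expand hW (e i)
        _ = ∑ j, ∑ i, ‖⟪(b j : H), e i⟫_ℂ‖ ^ 2 := Finset.sum_comm
        _ ≤ ∑ _j : Fin (Module.finrank ℂ W), (1 : ℝ) := by
            refine Finset.sum_le_sum fun j _ => ?_
            have h1 : ∀ i, ‖⟪(b j : H), e i⟫_ℂ‖ ^ 2 = ‖⟪e i, (b j : H)⟫_ℂ‖ ^ 2 := fun i => by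
              rw [norm_inner_symm]
            calc ∑ i, ‖⟪(b j : H), e i⟫_ℂ‖ ^ 2 = ∑ i, ‖⟪e i, (b j : H)⟫_ℂ‖ ^ 2 := by
                  simp_rw [h1]
              _ ≤ ‖(b j : H)‖ ^ 2 := he.sum_inner_products_le _
              _ = 1 := by
                  have : ‖(b j : H)‖ = 1 := b.orthonormal.1 j
                  rw [this]; norm_num
        _ = (Module.finrank ℂ W : ℝ) := by simp
    calc ∑ i, ENNReal.ofReal (‖projFn W (e i)‖ ^ 2)
        = ENNReal.ofReal (∑ i, ‖projFn W (e i)‖ ^ 2) :=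
          (ENNReal.ofReal_sum_of_nonneg fun i _ => sq_nonneg _).symm
      _ ≤ ENNReal.ofReal (Module.finrank ℂ W : ℝ) := ENNReal.ofReal_le_ofReal hreal
      _ = ((Module.rank ℂ W).toENat : ℝ≥0∞) := by rw [aux_dim_cast, ENNReal.ofReal_natCast]
  · rw [aux_dim_top hfin]; exact le_top

lemma aux_sum_proj_eq [FiniteDimensional ℂ H] {N : ℕ} (e : OrthonormalBasis (Fin N) ℂ H)
    (W : Submodule ℂ H) (hW : IsClosed (W : Set H)) :
    ∑ i, ‖projFn W (e i)‖ ^ 2 = (Module.finrank ℂ W : ℝ) := by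
  set b := stdOrthonormalBasis ℂ W with hb
  calc ∑ i, ‖projFn W (e i)‖ ^ 2
      = ∑ i, ∑ j, ‖⟪(b j : H), e i⟫_ℂ‖ ^ 2 :=
        Finset.sum_congr rfl fun i _ => aux_projFn_expand hW (e i)
    _ = ∑ j, ∑ i, ‖⟪(b j : H), e i⟫_ℂ‖ ^ 2 := Finset.sum_comm
    _ = ∑ _j : Fin (Module.finrank ℂ W), (1 : ℝ) := by
        refine Finset.sum_congr rfl fun j _ => ?_
        have h1 : ∀ i, ‖⟪(b j : H), e i⟫_ℂ‖ ^ 2 = ‖⟪e i, (b j : H)⟫_ℂ‖ ^ 2 := fun i => by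
          rw [norm_inner_symm]
        calc ∑ i, ‖⟪(b j : H), e i⟫_ℂ‖ ^ 2 = ∑ i, ‖⟪e i, (b j : H)⟫_ℂ‖ ^ 2 := by simp_rw [h1]
          _ = ‖(b j : H)‖ ^ 2 := (aux_onb_norm_sq e _).symm
          _ = 1 := by
              have : ‖(b j : H)‖ = 1 := b.orthonormal.1 j
              rw [this]; norm_num
    _ = (Module.finrank ℂ W : ℝ) := by simp

lemma aux_exists_orthonormal (n : ℕ) (hH : ¬ FiniteDimensional ℂ H) :
    ∃ e : Fin n → H, Orthonormal ℂ e := by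
  have h0 : (n : Cardinal) ≤ Module.rank ℂ H :=
    le_trans (Cardinal.nat_lt_aleph0 n).le
      (not_lt.1 fun hlt => hH (Module.rank_lt_aleph0_iff.1 hlt))
  obtain ⟨f, hf⟩ := exists_linearIndependent_of_le_rank h0
  set W : Submodule ℂ H := Submodule.span ℂ (Set.range f) with hWdef
  haveI : FiniteDimensional ℂ W := FiniteDimensional.span_of_finite ℂ (Set.finite_range f)
  have hcard : Module.finrank ℂ W = n := by
    rw [hWdef, finrank_span_eq_card hf, Fintype.card_fin]
  set b := stdOrthonormalBasis ℂ W with hbdef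
  refine ⟨(W.subtypeₗᵢ ∘ b) ∘ (finCongr hcard.symm), ?_⟩
  exact (b.orthonormal.comp_linearIsometry W.subtypeₗᵢ).comp _ (finCongr hcard.symm).injective

end Aux

/-- If `(F, v)` is a c-fusion frame with bounds `A, B`, then
`A · dim H ≤ ∫ v(x)² dim F(x) dμ(x) ≤ B · dim H`; in particular, if `dim H < ∞`
(and `H ≠ 0`), then `A ≤ ∫ v(x)² dμ(x)`. -/
theorem statement10 {μ : Measure X} {F : X → Submodule ℂ H} {v : X → ℝ} {A B : ℝ}
    (hv : Measurable v) (hv0 : ∀ x, 0 ≤ v x)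
    (hF : IsCFusionFrame μ F v A B) :
    (ENNReal.ofReal A * ((Module.rank ℂ H).toENat : ℝ≥0∞) ≤
        ∫⁻ x, ENNReal.ofReal ((v x) ^ 2) * (((Module.rank ℂ (F x)).toENat : ℝ≥0∞)) ∂μ ∧
      ∫⁻ x, ENNReal.ofReal ((v x) ^ 2) * (((Module.rank ℂ (F x)).toENat : ℝ≥0∞)) ∂μ ≤
        ENNReal.ofReal B * ((Module.rank ℂ H).toENat : ℝ≥0∞)) ∧
    (FiniteDimensional ℂ H → Nontrivial H →
      ENNReal.ofReal A ≤ ∫⁻ x, ENNReal.ofReal ((v x) ^ 2) ∂μ) := by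
  have hmeas : ∀ h : H,
      AEMeasurable (fun x => ENNReal.ofReal ((v x) ^ 2 * ‖projFn (F x) h‖ ^ 2)) μ := by
    intro h
    apply ENNReal.measurable_ofReal.comp_aemeasurable
    exact (hv.pow_const 2).aemeasurable.mul (((hF.meas h).norm.aemeasurable).pow_const 2)
  have hdecomp : ∀ (hfd : FiniteDimensional ℂ H),
      ∫⁻ x, ENNReal.ofReal ((v x) ^ 2) * (((Module.rank ℂ (F x)).toENat : ℝ≥0∞)) ∂μ
        = ∑ i, ∫⁻ x, ENNReal.ofReal
            ((v x) ^ 2 * ‖projFn (F x) (stdOrthonormalBasis ℂ H i)‖ ^ 2) ∂μ := by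
    intro hfd
    set e := stdOrthonormalBasis ℂ H with he
    have hpt : ∀ x, ENNReal.ofReal ((v x) ^ 2) * (((Module.rank ℂ (F x)).toENat : ℝ≥0∞))
        = ∑ i, ENNReal.ofReal ((v x) ^ 2 * ‖projFn (F x) (e i)‖ ^ 2) := by
      intro x
      haveI : FiniteDimensional ℂ (F x) := inferInstance
      calc ENNReal.ofReal ((v x) ^ 2) * (((Module.rank ℂ (F x)).toENat : ℝ≥0∞))
          = ENNReal.ofReal ((v x) ^ 2)
              * ENNReal.ofReal (∑ i, ‖projFn (F x) (e i)‖ ^ 2) := by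
            rw [aux_dim_cast, aux_sum_proj_eq e (F x) (hF.closed x), ENNReal.ofReal_natCast]
        _ = ENNReal.ofReal (∑ i, (v x) ^ 2 * ‖projFn (F x) (e i)‖ ^ 2) := by
            rw [← Finset.mul_sum, ENNReal.ofReal_mul (sq_nonneg _),
              ENNReal.ofReal_sum_of_nonneg fun i _ => sq_nonneg _]
        _ = ∑ i, ENNReal.ofReal ((v x) ^ 2 * ‖projFn (F x) (e i)‖ ^ 2) :=
            ENNReal.ofReal_sum_of_nonneg fun i _ => mul_nonneg (sq_nonneg _) (sq_nonneg _)
    rw [lintegral_congr hpt, lintegral_finset_sum' _ fun i _ => hmeas (e i)]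
  have hlow : ENNReal.ofReal A * ((Module.rank ℂ H).toENat : ℝ≥0∞) ≤
      ∫⁻ x, ENNReal.ofReal ((v x) ^ 2) * (((Module.rank ℂ (F x)).toENat : ℝ≥0∞)) ∂μ := by
    by_cases hfd : FiniteDimensional ℂ H
    · rw [hdecomp hfd, aux_dim_cast]
      set e := stdOrthonormalBasis ℂ H with he
      calc ENNReal.ofReal A * (Module.finrank ℂ H : ℝ≥0∞)
          = ∑ _i : Fin (Module.finrank ℂ H), ENNReal.ofReal A := by
            rw [Finset.sum_const, Finset.card_univ, Fintype.card_fin, nsmul_eq_mul, mul_comm]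
        _ ≤ ∑ i, ∫⁻ x, ENNReal.ofReal ((v x) ^ 2 * ‖projFn (F x) (e i)‖ ^ 2) ∂μ := by
            refine Finset.sum_le_sum fun i _ => ?_
            have h1 := hF.lower (e i)
            rwa [e.orthonormal.1 i, one_pow, mul_one] at h1
    · rw [aux_dim_top hfd]
      have hI : ∫⁻ x, ENNReal.ofReal ((v x) ^ 2)
          * (((Module.rank ℂ (F x)).toENat : ℝ≥0∞)) ∂μ = ⊤ := by
        by_contra hne
        have hA0 : ENNReal.ofReal A ≠ 0 := (ENNReal.ofReal_pos.2 hF.posA).ne'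
        have hn : ∀ n : ℕ, ENNReal.ofReal A * n ≤
            ∫⁻ x, ENNReal.ofReal ((v x) ^ 2) * (((Module.rank ℂ (F x)).toENat : ℝ≥0∞)) ∂μ := by
          intro n
          obtain ⟨e, hee⟩ := aux_exists_orthonormal n hfd
          have step1 : ∀ x, ∑ i, ENNReal.ofReal ((v x) ^ 2 * ‖projFn (F x) (e i)‖ ^ 2)
              ≤ ENNReal.ofReal ((v x) ^ 2) * (((Module.rank ℂ (F x)).toENat : ℝ≥0∞)) := by
            intro x
            calc ∑ i, ENNReal.ofReal ((v x) ^ 2 * ‖projFn (F x) (e i)‖ ^ 2)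
                = ENNReal.ofReal ((v x) ^ 2)
                    * ∑ i, ENNReal.ofReal (‖projFn (F x) (e i)‖ ^ 2) := by
                  rw [Finset.mul_sum]
                  exact Finset.sum_congr rfl fun i _ => ENNReal.ofReal_mul (sq_nonneg _)
              _ ≤ _ := mul_le_mul_right (aux_sum_proj_le hee (F x) (hF.closed x)) _
          calc ENNReal.ofReal A * n = ∑ _i : Fin n, ENNReal.ofReal A := by
                rw [Finset.sum_const, Finset.card_univ, Fintype.card_fin, nsmul_eq_mul, mul_comm]
            _ ≤ ∑ i, ∫⁻ x, ENNReal.ofReal ((v x) ^ 2 * ‖projFn (F x) (e i)‖ ^ 2) ∂μ := by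
                refine Finset.sum_le_sum fun i _ => ?_
                have h1 := hF.lower (e i)
                rwa [hee.1 i, one_pow, mul_one] at h1
            _ = ∫⁻ x, ∑ i, ENNReal.ofReal ((v x) ^ 2 * ‖projFn (F x) (e i)‖ ^ 2) ∂μ :=
                (lintegral_finset_sum' _ fun i _ => hmeas (e i)).symm
            _ ≤ _ := lintegral_mono step1
        obtain ⟨n, hn2⟩ := ENNReal.exists_nat_gt
          (ENNReal.div_lt_top hne hA0).ne
        have h3 := (ENNReal.div_lt_iff (Or.inl hA0) (Or.inl ENNReal.ofReal_ne_top)).1 hn2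
        rw [mul_comm] at h3
        exact absurd (hn n) (not_le.2 h3)
      rw [hI]
      exact le_top
  have hup : ∫⁻ x, ENNReal.ofReal ((v x) ^ 2) * (((Module.rank ℂ (F x)).toENat : ℝ≥0∞)) ∂μ ≤
      ENNReal.ofReal B * ((Module.rank ℂ H).toENat : ℝ≥0∞) := by
    by_cases hfd : FiniteDimensional ℂ H
    · rw [hdecomp hfd, aux_dim_cast]
      set e := stdOrthonormalBasis ℂ H with he
      calc ∑ i, ∫⁻ x, ENNReal.ofReal ((v x) ^ 2 * ‖projFn (F x) (e i)‖ ^ 2) ∂μ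
          ≤ ∑ _i : Fin (Module.finrank ℂ H), ENNReal.ofReal B := by
            refine Finset.sum_le_sum fun i _ => ?_
            have h1 := hF.bessel (e i)
            rwa [e.orthonormal.1 i, one_pow, mul_one] at h1
        _ = ENNReal.ofReal B * (Module.finrank ℂ H : ℝ≥0∞) := by
            rw [Finset.sum_const, Finset.card_univ, Fintype.card_fin, nsmul_eq_mul, mul_comm]
    · rw [aux_dim_top hfd]
      have hnt : Nontrivial H := by
        by_contra hc
        haveI := not_nontrivial_iff_subsingleton.mp hc
        exact hfd (Module.Finite.of_basis (Module.Basis.empty H (ι := Fin 0)))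
      obtain ⟨h, hne⟩ := exists_ne (0 : H)
      have h1 := (hF.lower h).trans (hF.bessel h)
      have hApos : 0 < A * ‖h‖ ^ 2 :=
        mul_pos hF.posA (pow_pos (norm_pos_iff.2 hne) 2)
      have hBpos : 0 < B * ‖h‖ ^ 2 :=
        ENNReal.ofReal_pos.1 (lt_of_lt_of_le (ENNReal.ofReal_pos.2 hApos) h1)
      have hB : 0 < B := by
        by_contra hc
        push_neg at hc
        nlinarith [sq_nonneg ‖h‖]
      rw [ENNReal.mul_top (ENNReal.ofReal_pos.2 hB).ne']
      exact le_top
  refine ⟨⟨hlow, hup⟩, fun hfd hnt => ?_⟩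
  have hN0 : (Module.finrank ℂ H : ℝ≥0∞) ≠ 0 :=
    Nat.cast_ne_zero.2 Module.finrank_pos.ne'
  have h2 : ∫⁻ x, ENNReal.ofReal ((v x) ^ 2) * (((Module.rank ℂ (F x)).toENat : ℝ≥0∞)) ∂μ
      ≤ (∫⁻ x, ENNReal.ofReal ((v x) ^ 2) ∂μ) * (Module.finrank ℂ H : ℝ≥0∞) := by
    have hdimle : ∀ x, (((Module.rank ℂ (F x)).toENat : ℝ≥0∞)) ≤ (Module.finrank ℂ H : ℝ≥0∞) := by
      intro x
      have hmono : ((Module.rank ℂ (F x)).toENat : ℝ≥0∞) ≤ ((Module.rank ℂ H).toENat : ℝ≥0∞) :=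
        ENat.toENNReal_le.2 (Cardinal.toENat.monotone' (Submodule.rank_le (F x)))
      exact hmono.trans_eq aux_dim_cast
    calc ∫⁻ x, ENNReal.ofReal ((v x) ^ 2) * (((Module.rank ℂ (F x)).toENat : ℝ≥0∞)) ∂μ
        ≤ ∫⁻ x, ENNReal.ofReal ((v x) ^ 2) * (Module.finrank ℂ H : ℝ≥0∞) ∂μ :=
          lintegral_mono fun x => mul_le_mul_right (hdimle x) _
      _ = (∫⁻ x, ENNReal.ofReal ((v x) ^ 2) ∂μ) * (Module.finrank ℂ H : ℝ≥0∞) :=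
          lintegral_mul_const _ (ENNReal.measurable_ofReal.comp (hv.pow_const 2))
  have h1 : ENNReal.ofReal A * (Module.finrank ℂ H : ℝ≥0∞)
      ≤ (∫⁻ x, ENNReal.ofReal ((v x) ^ 2) ∂μ) * (Module.finrank ℂ H : ℝ≥0∞) := by
    refine le_trans ?_ h2
    rw [← aux_dim_cast]
    exact hlow
  exact (ENNReal.mul_le_mul_iff_left hN0 (ENat.toENNReal_coe _ ▸ ENNReal.natCast_ne_top _)).1 h1
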